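/- Let F be a field, (P,≤) a poset, and I ⊆ P an interval (i.e., a connected and convex subset). Then the interval module F𝕀 is thin and indecomposable; more precisely, its endomorphism ring End(F𝕀) in the category of persistence modules over (P,≤) is isomorphic to F as a ring. -/

import Mathlib

/-- A persistence module over a preorder `P` with coefficients in a field `F`:
a functor `(P,≤) → Vect_F`, given by vector spaces `V p` and linear maps
`map : i ≤ j → (V i →ₗ[F] V j)` satisfying the functoriality equations. -/
structure PersistenceModule (F : Type) [Field F] (P : Type) [Preorder P] where
  V : P → Type
  [addCommGroup : ∀ p, AddCommGroup (V p)]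
  [module : ∀ p, Module F (V p)]
  map : ∀ {i j : P}, i ≤ j → (V i →ₗ[F] V j)
  map_id : ∀ i : P, map (le_refl i) = LinearMap.id
  map_comp : ∀ {i j k : P} (hij : i ≤ j) (hjk : j ≤ k),
    (map hjk).comp (map hij) = map (hij.trans hjk)

attribute [instance] PersistenceModule.addCommGroup PersistenceModule.module

/-- A zigzag path `a - x₁ - ⋯ - xₙ - b` in a preorder, where each consecutive
pair of points is comparable. -/
inductive Zigzag (P : Type) [Preorder P] : P → P → Type
  | single (a : P) : Zigzag P a a
  | consLe {a b c : P} (h : a ≤ b) (p : Zigzag P b c) : Zigzag P a c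
  | consGe {a b c : P} (h : b ≤ a) (p : Zigzag P b c) : Zigzag P a c

/-- Convexity of a subset of a poset: `i ≤ j ≤ k` with `i, k ∈ J` implies `j ∈ J`. -/
def PosetConvex {P : Type} [Preorder P] (J : Set P) : Prop :=
  ∀ i ∈ J, ∀ k ∈ J, ∀ j : P, i ≤ j → j ≤ k → j ∈ J

/-- Connectedness: any two points of `J` are joined by a finite zigzag path inside `J`. -/
def ZigzagConnected {P : Type} [Preorder P] (J : Set P) : Prop :=
  ∀ a b : J, Nonempty (Zigzag (↥J) a b)

open Classical in
/-- The interval (polytope) module `F𝕀` on a convex subset `I`: the vector space `F`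
at points of `I` (realized as the submodule `⊤ ≤ F`) and `0` (the submodule `⊥`)
elsewhere, with identity maps for comparable pairs inside `I` and zero maps
otherwise. -/
noncomputable def intervalModule (F : Type) [Field F] {P : Type} [Preorder P]
    (I : Set P) (hconv : PosetConvex I) : PersistenceModule F P where
  V p := ↥(if p ∈ I then (⊤ : Submodule F F) else ⊥)
  addCommGroup _ := inferInstance
  module _ := inferInstance
  map {i j} _ :=
    if hij : i ∈ I ∧ j ∈ I then
      Submodule.inclusion (by simp [hij.1, hij.2])
    else 0
  map_id := by
    intro i
    try dsimp only
    by_cases hi : i ∈ I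
    · rw [dif_pos (show i ∈ I ∧ i ∈ I from ⟨hi, hi⟩)]
      ext x
      rfl
    · rw [dif_neg (show ¬(i ∈ I ∧ i ∈ I) from fun h => hi h.1)]
      have : Subsingleton ↥(if i ∈ I then (⊤ : Submodule F F) else ⊥) := by
        rw [if_neg hi]; infer_instance
      exact Subsingleton.elim _ _
  map_comp := by
    intro i j k hij hjk
    try dsimp only
    by_cases hi : i ∈ I
    · by_cases hk : k ∈ I
      · have hj : j ∈ I := hconv i hi k hk j hij hjk
        rw [dif_pos (show i ∈ I ∧ j ∈ I from ⟨hi, hj⟩),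
          dif_pos (show j ∈ I ∧ k ∈ I from ⟨hj, hk⟩),
          dif_pos (show i ∈ I ∧ k ∈ I from ⟨hi, hk⟩)]
        ext x
        rfl
      · rw [dif_neg (show ¬(j ∈ I ∧ k ∈ I) from fun h => hk h.2),
          dif_neg (show ¬(i ∈ I ∧ k ∈ I) from fun h => hk h.2)]
        have : Subsingleton ↥(if k ∈ I then (⊤ : Submodule F F) else ⊥) := by
          rw [if_neg hk]; infer_instance
        exact Subsingleton.elim _ _
    · rw [dif_neg (show ¬(i ∈ I ∧ j ∈ I) from fun h => hi h.1),
        dif_neg (show ¬(i ∈ I ∧ k ∈ I) from fun h => hi h.1)]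
      ext x
      simp

/-- A subrepresentation of a persistence module: a family of submodules closed
under the structure maps. -/
structure Subrep {F : Type} [Field F] {P : Type} [Preorder P] (M : PersistenceModule F P) where
  S : ∀ p, Submodule F (M.V p)
  stable : ∀ {i j : P} (h : i ≤ j), Submodule.map (M.map h) (S i) ≤ S j

/-- A persistence module is decomposable if it is the (internal) direct sum of two
nonzero subrepresentations. -/
def PersistenceModule.Decomposable {F : Type} [Field F] {P : Type} [Preorder P]
    (M : PersistenceModule F P) : Prop :=
  ∃ A B : Subrep M, (∃ p, A.S p ≠ ⊥) ∧ (∃ p, B.S p ≠ ⊥) ∧ ∀ p, IsCompl (A.S p) (B.S p)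

/-- A morphism of persistence modules (a natural transformation). -/
structure PersHom {F : Type} [Field F] {P : Type} [Preorder P]
    (M N : PersistenceModule F P) where
  app : ∀ p, M.V p →ₗ[F] N.V p
  natural : ∀ {i j : P} (h : i ≤ j), (N.map h).comp (app i) = (app j).comp (M.map h)

/-- Composition of morphisms of persistence modules. -/
def PersHom.comp {F : Type} [Field F] {P : Type} [Preorder P]
    {M N K : PersistenceModule F P} (g : PersHom N K) (f : PersHom M N) : PersHom M K where
  app p := (g.app p).comp (f.app p)
  natural {i j} h := by
    ext x
    have hg := LinearMap.congr_fun (g.natural h) (f.app i x)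
    have hf := LinearMap.congr_fun (f.natural h) x
    simp only [LinearMap.comp_apply] at hg hf ⊢
    rw [hg, hf]

/-- Pointwise sum of morphisms of persistence modules. -/
def PersHom.add {F : Type} [Field F] {P : Type} [Preorder P]
    {M N : PersistenceModule F P} (f g : PersHom M N) : PersHom M N where
  app p := f.app p + g.app p
  natural {i j} h := by
    ext x
    have hg := LinearMap.congr_fun (g.natural h) x
    have hf := LinearMap.congr_fun (f.natural h) x
    simp only [LinearMap.comp_apply, LinearMap.add_apply, map_add] at hg hf ⊢
    rw [hg, hf]

/-- The identity endomorphism of a persistence module. -/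
def PersHom.one {F : Type} [Field F] {P : Type} [Preorder P]
    (M : PersistenceModule F P) : PersHom M M where
  app _ := LinearMap.id
  natural h := by simp

namespace IMAux

open Classical

variable {F : Type} [Field F] {P : Type} [PartialOrder P] {I : Set P}
  (hconv : PosetConvex I)

/-- The underlying scalar of an element of the interval module. -/
noncomputable def vl {p : P} (x : (intervalModule F I hconv).V p) : F := x.val

lemma vl_injective {p : P} : Function.Injective (vl (F := F) hconv (p := p)) :=
  fun _ _ h => Subtype.ext h

lemma vl_smul {p : P} (c : F) (x : (intervalModule F I hconv).V p) :
    vl hconv (c • x) = c * vl hconv x := rfl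

lemma vl_add {p : P} (x y : (intervalModule F I hconv).V p) :
    vl hconv (x + y) = vl hconv x + vl hconv y := rfl

lemma vl_zero {p : P} : vl hconv (0 : (intervalModule F I hconv).V p) = 0 := rfl

/-- The canonical generator of `(intervalModule F I hconv).V p` for `p ∈ I`. -/
noncomputable def gen {p : P} (hp : p ∈ I) : (intervalModule F I hconv).V p :=
  ⟨1, by simp [intervalModule, hp]⟩

lemma gen_val {p : P} (hp : p ∈ I) : vl hconv (gen (F := F) hconv hp) = 1 := rfl

lemma gen_ne_zero {p : P} (hp : p ∈ I) : gen (F := F) hconv hp ≠ 0 := by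
  intro h
  exact one_ne_zero (((gen_val hconv hp).symm.trans
    (congrArg (vl hconv) h)).trans (vl_zero hconv))

lemma eq_smul_gen {p : P} (hp : p ∈ I) (x : (intervalModule F I hconv).V p) :
    x = vl hconv x • gen hconv hp := by
  apply vl_injective hconv
  rw [vl_smul, gen_val, mul_one]

lemma subsingleton_of_not_mem {p : P} (hp : p ∉ I) :
    Subsingleton ((intervalModule F I hconv).V p) := by
  show Subsingleton ↥(if p ∈ I then (⊤ : Submodule F F) else ⊥)
  rw [if_neg hp]
  infer_instance

lemma map_gen {i j : P} (h : i ≤ j) (hi : i ∈ I) (hj : j ∈ I) :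
    (intervalModule F I hconv).map h (gen hconv hi) = gen hconv hj := by
  apply vl_injective hconv
  rw [gen_val]
  show (((if hij : i ∈ I ∧ j ∈ I then
      Submodule.inclusion (by simp [hij.1, hij.2]) else 0 :
        (intervalModule F I hconv).V i →ₗ[F] (intervalModule F I hconv).V j))
      (gen hconv hi)).val = 1
  erw [dif_pos ⟨hi, hj⟩]
  rfl

lemma vl_map {i j : P} (h : i ≤ j) (hi : i ∈ I) (hj : j ∈ I)
    (x : (intervalModule F I hconv).V i) :
    vl hconv ((intervalModule F I hconv).map h x) = vl hconv x := by
  conv_lhs => rw [eq_smul_gen hconv hi x]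
  rw [map_smul, vl_smul, map_gen hconv h hi hj, gen_val, mul_one]

/-- The scalar of an endomorphism at a point of `I`. -/
noncomputable def scal (f : PersHom (intervalModule F I hconv) (intervalModule F I hconv))
    {p : P} (hp : p ∈ I) : F :=
  vl hconv (f.app p (gen hconv hp))

lemma app_val (f : PersHom (intervalModule F I hconv) (intervalModule F I hconv))
    {p : P} (hp : p ∈ I) (x : (intervalModule F I hconv).V p) :
    vl hconv (f.app p x) = vl hconv x * scal hconv f hp := by
  conv_lhs => rw [eq_smul_gen hconv hp x]
  rw [map_smul, vl_smul]
  rfl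

lemma scal_comparable (f : PersHom (intervalModule F I hconv) (intervalModule F I hconv))
    {i j : P} (h : i ≤ j) (hi : i ∈ I) (hj : j ∈ I) :
    scal hconv f hi = scal hconv f hj := by
  have hnat := LinearMap.congr_fun (f.natural h) (gen hconv hi)
  simp only [LinearMap.comp_apply] at hnat
  rw [map_gen hconv h hi hj] at hnat
  have := congrArg (vl hconv) hnat
  rw [vl_map hconv h hi hj] at this
  exact this

lemma scal_zigzag (f : PersHom (intervalModule F I hconv) (intervalModule F I hconv))
    {a b : ↥I} (z : Zigzag ↥I a b) :
    scal hconv f a.2 = scal hconv f b.2 := by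
  induction z with
  | single a => rfl
  | consLe h p ih => exact (scal_comparable hconv f h _ _).trans ih
  | consGe h p ih => exact (scal_comparable hconv f h _ _).symm.trans ih

lemma persHom_ext {M N : PersistenceModule F P} {f g : PersHom M N}
    (h : ∀ p, f.app p = g.app p) : f = g := by
  cases f; cases g
  simp only [PersHom.mk.injEq]
  exact funext h

/-- Submodules of the one-dimensional space are `⊥` or `⊤`. -/
lemma submodule_dichotomy {p : P} (hp : p ∈ I)
    (S : Submodule F ((intervalModule F I hconv).V p)) : S = ⊥ ∨ S = ⊤ := by
  by_cases hS : S = ⊥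
  · exact Or.inl hS
  · right
    obtain ⟨x, hxS, hx0⟩ := Submodule.exists_mem_ne_zero_of_ne_bot hS
    have hxval : vl hconv x ≠ 0 := by
      intro h
      exact hx0 (vl_injective hconv (h.trans (vl_zero hconv).symm))
    rw [eq_top_iff]
    intro y _
    have : y = (vl hconv y / vl hconv x) • x := by
      apply vl_injective hconv
      rw [vl_smul]
      field_simp
    rw [this]
    exact S.smul_mem _ hxS

lemma top_ne_bot {p : P} (hp : p ∈ I) :
    (⊤ : Submodule F ((intervalModule F I hconv).V p)) ≠ ⊥ := by
  intro h
  have : gen (F := F) hconv hp ∈ (⊥ : Submodule F ((intervalModule F I hconv).V p)) := by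
    rw [← h]; trivial
  exact gen_ne_zero hconv hp (Submodule.mem_bot F |>.mp this)

lemma subrep_bot_of_not_mem (A : Subrep (intervalModule F I hconv)) {p : P} (hp : p ∉ I) :
    A.S p = ⊥ := by
  haveI := subsingleton_of_not_mem (F := F) hconv hp
  exact Subsingleton.elim _ _

lemma subrep_forward (A : Subrep (intervalModule F I hconv)) {i j : P} (h : i ≤ j)
    (hi : i ∈ I) (hj : j ∈ I) (hA : A.S i = ⊤) : A.S j = ⊤ := by
  have hgen : gen hconv hj ∈ A.S j := by
    apply A.stable h
    exact ⟨gen hconv hi, by rw [hA]; trivial, map_gen hconv h hi hj⟩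
  rcases submodule_dichotomy hconv hj (A.S j) with hb | ht
  · exact absurd (hb ▸ hgen) (fun hz => gen_ne_zero hconv hj (Submodule.mem_bot F |>.mp hz))
  · exact ht

lemma subrep_backward (A B : Subrep (intervalModule F I hconv))
    (hcompl : ∀ p, IsCompl (A.S p) (B.S p)) {i j : P} (h : i ≤ j)
    (hi : i ∈ I) (hj : j ∈ I) (hA : A.S j = ⊤) : A.S i = ⊤ := by
  have hBj : B.S j = ⊥ := by
    have := (hcompl j).disjoint
    rw [hA] at this
    exact top_disjoint.mp this
  have hBi : B.S i = ⊥ := by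
    rcases submodule_dichotomy hconv hi (B.S i) with hb | ht
    · exact hb
    · exact absurd ((subrep_forward hconv B h hi hj ht).symm.trans hBj) (top_ne_bot hconv hj)
  have := (hcompl i).codisjoint
  rw [hBi] at this
  exact codisjoint_bot.mp this

lemma subrep_top_zigzag (A B : Subrep (intervalModule F I hconv))
    (hcompl : ∀ p, IsCompl (A.S p) (B.S p)) {a b : ↥I} (z : Zigzag ↥I a b)
    (hA : A.S a = ⊤) : A.S b = ⊤ := by
  induction z with
  | single a => exact hA
  | @consLe x y z h p ih => exact ih (subrep_forward hconv A h x.2 y.2 hA)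
  | @consGe x y z h p ih => exact ih (subrep_backward hconv A B hcompl h y.2 x.2 hA)

lemma rank_le_one (p : P) : Module.rank F ((intervalModule F I hconv).V p) ≤ 1 := by
  have h := Submodule.rank_le (R := F) (M := F) (if p ∈ I then (⊤ : Submodule F F) else ⊥)
  rw [Module.rank_self] at h
  exact h

end IMAux

/-- The interval module `F𝕀` on an interval `I` (a nonempty connected
convex subset of the poset `P`) is thin and indecomposable; more precisely its
endomorphism ring is isomorphic to `F` as a ring. -/
theorem statement0 (F : Type) [Field F] (P : Type) [PartialOrder P]
    (I : Set P) (hne : I.Nonempty) (hconv : PosetConvex I) (hconn : ZigzagConnected I) :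
    (∀ p : P, Module.rank F ((intervalModule F I hconv).V p) ≤ 1) ∧
    ¬ (intervalModule F I hconv).Decomposable ∧
    ∃ Φ : PersHom (intervalModule F I hconv) (intervalModule F I hconv) → F,
      Function.Bijective Φ ∧
      (∀ f g, Φ (f.add g) = Φ f + Φ g) ∧
      (∀ f g, Φ (f.comp g) = Φ f * Φ g) ∧
      Φ (PersHom.one (intervalModule F I hconv)) = 1 := by
  classical
  obtain ⟨p0, hp0⟩ := hne
  open IMAux in
  refine ⟨rank_le_one hconv, ?_, fun f => scal hconv f hp0, ⟨?_, ?_⟩, ?_, ?_, ?_⟩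
  · -- indecomposable
    rintro ⟨A, B, ⟨p, hAp⟩, ⟨q, hBq⟩, hcompl⟩
    have hpI : p ∈ I := by
      by_contra h
      exact hAp (subrep_bot_of_not_mem hconv A h)
    have hqI : q ∈ I := by
      by_contra h
      exact hBq (subrep_bot_of_not_mem hconv B h)
    have hAtop : A.S p = ⊤ := (submodule_dichotomy hconv hpI (A.S p)).resolve_left hAp
    have hBtop : B.S q = ⊤ := (submodule_dichotomy hconv hqI (B.S q)).resolve_left hBq
    obtain ⟨z⟩ := hconn ⟨p, hpI⟩ ⟨q, hqI⟩
    have hAq : A.S q = ⊤ := subrep_top_zigzag hconv A B hcompl z hAtop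
    have hdisj := (hcompl q).disjoint
    rw [hAq, hBtop] at hdisj
    exact top_ne_bot hconv hqI (top_disjoint.mp hdisj)
  · -- injective
    intro f g h
    apply persHom_ext
    intro p
    by_cases hp : p ∈ I
    · ext x
      apply vl_injective hconv
      rw [app_val hconv f hp, app_val hconv g hp]
      obtain ⟨z⟩ := hconn ⟨p, hp⟩ ⟨p0, hp0⟩
      rw [scal_zigzag hconv f z, scal_zigzag hconv g z]
      exact congrArg (vl hconv x * ·) h
    · haveI := subsingleton_of_not_mem (F := F) hconv hp
      ext x
      exact Subsingleton.elim _ _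
  · -- surjective
    intro c
    refine ⟨⟨fun p => c • LinearMap.id, ?_⟩, ?_⟩
    · intro i j h
      ext x
      simp
    · show vl hconv (c • gen hconv hp0) = c
      rw [vl_smul, gen_val, mul_one]
  · -- additive
    intro f g
    show vl hconv ((f.add g).app p0 (gen hconv hp0)) = _
    show vl hconv (f.app p0 (gen hconv hp0) + g.app p0 (gen hconv hp0)) = _
    rw [vl_add]
    rfl
  · -- multiplicative
    intro f g
    show vl hconv (f.app p0 (g.app p0 (gen hconv hp0))) = _
    rw [app_val hconv f hp0]
    show vl hconv (g.app p0 (gen hconv hp0)) * _ = _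
    rw [mul_comm]
    rfl
  · -- unit
    exact gen_val hconv hp0
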